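/- Let Ω ⊂ ℝⁿ be a closed rectangular box (a product of nondegenerate compact intervals) with outward unit normal ν on ∂Ω. Let ρ : [0,1] × Ω → ℝ be continuously differentiable with ρ(t, x) > 0 everywhere, and let m : [0,1] × Ω → ℝⁿ be continuously differentiable, satisfying the continuity equation ∂_t ρ(t, x) + ∇_x · m(t, x) = 0 on [0,1] × Ω and the zero-flux boundary condition m(t, x) · ν(x) = 0 for all (t, x) ∈ [0,1] × ∂Ω. Then ∫₀¹ ∫_Ω m(t, x) · ∇_x log ρ(t, x) dx dt = ∫_Ω ρ(1, x) log ρ(1, x) dx − ∫_Ω ρ(0, x) log ρ(0, x) dx. -/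

import Mathlib

open MeasureTheory

noncomputable def splitCLM (n : ℕ) : (Fin (n+1) → ℝ) →L[ℝ] ℝ × (Fin n → ℝ) :=
  (ContinuousLinearMap.proj 0).prod
    (ContinuousLinearMap.pi fun j : Fin n => ContinuousLinearMap.proj j.succ)

theorem splitCLM_apply (n : ℕ) (y : Fin (n+1) → ℝ) : splitCLM n y = (y 0, Fin.tail y) := rfl

theorem splitCLM_single_zero (n : ℕ) :
    splitCLM n (Pi.single (0 : Fin (n+1)) (1:ℝ)) = ((1:ℝ), (0 : Fin n → ℝ)) := by
  refine Prod.ext ?_ ?_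
  · simp [splitCLM_apply]
  · funext j
    simp [splitCLM_apply, Fin.tail, Pi.single_eq_of_ne (Fin.succ_ne_zero j)]

theorem splitCLM_single_succ (n : ℕ) (j : Fin n) :
    splitCLM n (Pi.single (j.succ : Fin (n+1)) (1:ℝ)) = ((0:ℝ), Pi.single j (1:ℝ)) := by
  refine Prod.ext ?_ ?_
  · simp [splitCLM_apply, Pi.single_eq_of_ne (Fin.succ_ne_zero j).symm]
  · funext k
    simp [splitCLM_apply, Fin.tail, Pi.single_apply, Fin.succ_inj]

/-- Let `Ω = [a, b] ⊂ ℝⁿ` be a closed nondegenerate rectangular box. Let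
`ρ : [0,1] × Ω → ℝ` be continuously differentiable and positive and
`m : [0,1] × Ω → ℝⁿ` continuously differentiable, satisfying the continuity equation
`∂_t ρ + ∇_x · m = 0` on `[0,1] × Ω` and the zero-flux boundary condition `m · ν = 0`
on `[0,1] × ∂Ω` (on the face `{x_i = a_i}` resp. `{x_i = b_i}` the outward normal is
`∓e_i`, so the condition reads `m_i = 0` there). Then
`∫₀¹ ∫_Ω m · ∇_x log ρ dx dt = ∫_Ω ρ(1,·) log ρ(1,·) dx − ∫_Ω ρ(0,·) log ρ(0,·) dx`. -/
theorem integral_flux_dot_grad_log_eq_entropy_difference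
    (n : ℕ) (a b : Fin n → ℝ) (hab : ∀ i, a i < b i)
    (ρ : ℝ → (Fin n → ℝ) → ℝ) (m : ℝ → (Fin n → ℝ) → (Fin n → ℝ))
    (hρ : ContDiff ℝ 1 (fun p : ℝ × (Fin n → ℝ) => ρ p.1 p.2))
    (hm : ContDiff ℝ 1 (fun p : ℝ × (Fin n → ℝ) => m p.1 p.2))
    (hρpos : ∀ t ∈ Set.Icc (0 : ℝ) 1, ∀ x ∈ Set.Icc a b, 0 < ρ t x)
    (hcontinuity : ∀ t ∈ Set.Icc (0 : ℝ) 1, ∀ x ∈ Set.Icc a b,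
      deriv (fun s => ρ s x) t +
        ∑ i, fderiv ℝ (fun y => m t y i) x (Pi.single i 1) = 0)
    (hflux : ∀ t ∈ Set.Icc (0 : ℝ) 1, ∀ x ∈ Set.Icc a b, ∀ i,
      (x i = a i ∨ x i = b i) → m t x i = 0) :
    ∫ t in Set.Icc (0 : ℝ) 1, ∫ x in Set.Icc a b,
        ∑ i, m t x i * fderiv ℝ (fun y => Real.log (ρ t y)) x (Pi.single i 1) =
      (∫ x in Set.Icc a b, ρ 1 x * Real.log (ρ 1 x)) -
        ∫ x in Set.Icc a b, ρ 0 x * Real.log (ρ 0 x) := by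
  classical
  set P : ℝ × (Fin n → ℝ) → ℝ := fun p => ρ p.1 p.2 with hPdef
  set M : Fin n → ℝ × (Fin n → ℝ) → ℝ := fun j p => m p.1 p.2 j with hMdef
  have hPc : ContDiff ℝ 1 P := hρ
  have hMc : ∀ j, ContDiff ℝ 1 (M j) := fun j => contDiff_pi.mp hm j
  have hPdiff : Differentiable ℝ P := hPc.differentiable one_ne_zero
  have hMdiff : ∀ j, Differentiable ℝ (M j) := fun j => (hMc j).differentiable one_ne_zero
  set ι : (Fin (n+1) → ℝ) →L[ℝ] ℝ × (Fin n → ℝ) := splitCLM n with hιdef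
  set a' : Fin (n+1) → ℝ := Fin.cons 0 a with ha'
  set b' : Fin (n+1) → ℝ := Fin.cons 1 b with hb'
  have hle : a' ≤ b' := by
    intro i
    induction i using Fin.cases with
    | zero => simp [ha', hb']
    | succ j => simpa [ha', hb'] using (hab j).le
  have hmem : ∀ y ∈ Set.Icc a' b',
      y 0 ∈ Set.Icc (0:ℝ) 1 ∧ Fin.tail y ∈ Set.Icc a b := by
    intro y hy
    obtain ⟨h1, h2⟩ := hy
    refine ⟨⟨?_, ?_⟩, ⟨fun j => ?_, fun j => ?_⟩⟩
    · simpa [ha'] using h1 0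
    · simpa [hb'] using h2 0
    · simpa [ha', Fin.tail] using h1 j.succ
    · simpa [hb', Fin.tail] using h2 j.succ
  have hpos : ∀ y ∈ Set.Icc a' b', 0 < P (ι y) := fun y hy =>
    hρpos _ (hmem y hy).1 _ (hmem y hy).2
  -- partial derivative identifications
  have hPt : ∀ (t : ℝ) (x : Fin n → ℝ),
      HasDerivAt (fun s => ρ s x) (fderiv ℝ P (t, x) (1, 0)) t := by
    intro t x
    have h1 : HasFDerivAt (fun s : ℝ => (s, x))
        ((ContinuousLinearMap.id ℝ ℝ).prod 0) t :=
      (hasFDerivAt_id t).prodMk (hasFDerivAt_const x t)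
    exact (((hPdiff (t, x)).hasFDerivAt).comp t h1).hasDerivAt
  have hPx : ∀ (t : ℝ) (x : Fin n → ℝ),
      HasFDerivAt (fun y => ρ t y)
        ((fderiv ℝ P (t, x)).comp
          ((0 : (Fin n → ℝ) →L[ℝ] ℝ).prod (ContinuousLinearMap.id ℝ (Fin n → ℝ)))) x := by
    intro t x
    have h1 : HasFDerivAt (fun y : Fin n → ℝ => (t, y))
        ((0 : (Fin n → ℝ) →L[ℝ] ℝ).prod (ContinuousLinearMap.id ℝ (Fin n → ℝ))) x :=
      (hasFDerivAt_const t x).prodMk (hasFDerivAt_id x)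
    exact ((hPdiff (t, x)).hasFDerivAt).comp x h1
  have hMx : ∀ (t : ℝ) (x : Fin n → ℝ) (j : Fin n),
      HasFDerivAt (fun y => m t y j)
        ((fderiv ℝ (M j) (t, x)).comp
          ((0 : (Fin n → ℝ) →L[ℝ] ℝ).prod (ContinuousLinearMap.id ℝ (Fin n → ℝ)))) x := by
    intro t x j
    have h1 : HasFDerivAt (fun y : Fin n → ℝ => (t, y))
        ((0 : (Fin n → ℝ) →L[ℝ] ℝ).prod (ContinuousLinearMap.id ℝ (Fin n → ℝ))) x :=
      (hasFDerivAt_const t x).prodMk (hasFDerivAt_id x)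
    exact ((hMdiff j (t, x)).hasFDerivAt).comp x h1
  have hlog : ∀ t ∈ Set.Icc (0:ℝ) 1, ∀ x ∈ Set.Icc a b, ∀ i : Fin n,
      fderiv ℝ (fun y => Real.log (ρ t y)) x (Pi.single i 1)
        = (ρ t x)⁻¹ * fderiv ℝ P (t, x) (0, Pi.single i 1) := by
    intro t ht x hx i
    have hp := hρpos t ht x hx
    have h := ((hPx t x).log hp.ne').fderiv
    rw [h]
    simp [ContinuousLinearMap.smul_apply]
  have hce : ∀ t ∈ Set.Icc (0:ℝ) 1, ∀ x ∈ Set.Icc a b,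
      fderiv ℝ P (t, x) (1, 0) + ∑ j, fderiv ℝ (M j) (t, x) (0, Pi.single j 1) = 0 := by
    intro t ht x hx
    have h := hcontinuity t ht x hx
    rw [(hPt t x).deriv] at h
    have h2 : ∀ j : Fin n, fderiv ℝ (fun y => m t y j) x (Pi.single j 1)
        = fderiv ℝ (M j) (t, x) (0, Pi.single j 1) := by
      intro j
      rw [(hMx t x j).fderiv]
      simp
    simp only [h2] at h
    exact h
  -- the integrand as a function on the product space
  set G : ℝ × (Fin n → ℝ) → ℝ :=
    fun p => ∑ i, M i p * ((P p)⁻¹ * fderiv ℝ P p (0, Pi.single i 1)) with hGdef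
  have hGcont : ContinuousOn G (Set.Icc ((0:ℝ), a) ((1:ℝ), b)) := by
    apply continuousOn_finset_sum
    intro i _
    apply ContinuousOn.mul
    · exact (hMc i).continuous.continuousOn
    · apply ContinuousOn.mul
      · apply ContinuousOn.inv₀ hPc.continuous.continuousOn
        intro p hp
        exact (hρpos p.1 ⟨hp.1.1, hp.2.1⟩ p.2 ⟨hp.1.2, hp.2.2⟩).ne'
      · exact ((hPc.continuous_fderiv one_ne_zero).clm_apply continuous_const).continuousOn
  have hmaps : ∀ y ∈ Set.Icc a' b', ι y ∈ Set.Icc ((0:ℝ), a) ((1:ℝ), b) := by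
    intro y hy
    obtain ⟨⟨h1, h2⟩, h3, h4⟩ := hmem y hy
    exact ⟨⟨h1, h3⟩, h2, h4⟩
  -- the vector field and its derivative
  set f : Fin (n+1) → (Fin (n+1) → ℝ) → ℝ :=
    Fin.cons (fun y => P (ι y) * Real.log (P (ι y)))
      (fun j y => M j (ι y) * (Real.log (P (ι y)) + 1)) with hfdef
  set f' : Fin (n+1) → (Fin (n+1) → ℝ) → (Fin (n+1) → ℝ) →L[ℝ] ℝ :=
    Fin.cons (fun y => (Real.log (P (ι y)) + 1) • ((fderiv ℝ P (ι y)).comp ι))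
      (fun j y => (M j (ι y) * (P (ι y))⁻¹) • ((fderiv ℝ P (ι y)).comp ι)
        + (Real.log (P (ι y)) + 1) • ((fderiv ℝ (M j) (ι y)).comp ι)) with hf'def
  have hu : ∀ y, HasFDerivAt (fun z => P (ι z)) ((fderiv ℝ P (ι y)).comp ι) y :=
    fun y => ((hPdiff (ι y)).hasFDerivAt).comp y ι.hasFDerivAt
  have hv : ∀ (j : Fin n) (y), HasFDerivAt (fun z => M j (ι z))
      ((fderiv ℝ (M j) (ι y)).comp ι) y :=
    fun j y => ((hMdiff j (ι y)).hasFDerivAt).comp y ι.hasFDerivAt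
  have hd0 : ∀ y, 0 < P (ι y) → HasFDerivAt (f 0) (f' 0 y) y := by
    intro y hy
    have h1 := (hu y).mul ((hu y).log hy.ne')
    have e0 : f 0 = fun y => P (ι y) * Real.log (P (ι y)) := by
      rw [hfdef]; rfl
    have e0' : f' 0 y = (Real.log (P (ι y)) + 1) • ((fderiv ℝ P (ι y)).comp ι) := by
      rw [hf'def]; rfl
    rw [e0, e0']
    refine h1.congr_fderiv ?_
    rw [smul_smul, mul_inv_cancel₀ hy.ne', one_smul, add_smul, one_smul]
    abel
  have hds : ∀ (j : Fin n) (y), 0 < P (ι y) → HasFDerivAt (f j.succ) (f' j.succ y) y := by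
    intro j y hy
    have h1 := (hv j y).mul (((hu y).log hy.ne').add_const 1)
    have e0 : f j.succ = fun y => M j (ι y) * (Real.log (P (ι y)) + 1) := by
      rw [hfdef]; rfl
    have e0' : f' j.succ y = (M j (ι y) * (P (ι y))⁻¹) • ((fderiv ℝ P (ι y)).comp ι)
        + (Real.log (P (ι y)) + 1) • ((fderiv ℝ (M j) (ι y)).comp ι) := by
      rw [hf'def]; rfl
    rw [e0, e0']
    refine h1.congr_fderiv ?_
    rw [smul_smul]
  -- divergence equals the integrand
  have hdiv : ∀ y ∈ Set.Icc a' b',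
      (∑ i, f' i y (Pi.single i 1)) = G (ι y) := by
    intro y hy
    have ht := (hmem y hy).1
    have hx := (hmem y hy).2
    have hce' : fderiv ℝ P (ι y) (1, 0)
        + ∑ j, fderiv ℝ (M j) (ι y) (0, Pi.single j 1) = 0 := hce (y 0) ht (Fin.tail y) hx
    rw [Fin.sum_univ_succ]
    have hs0 : ι (Pi.single (0 : Fin (n+1)) (1:ℝ)) = ((1:ℝ), (0 : Fin n → ℝ)) :=
      splitCLM_single_zero n
    have hss : ∀ j : Fin n, ι (Pi.single (j.succ : Fin (n+1)) (1:ℝ))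
        = ((0:ℝ), Pi.single j (1:ℝ)) := splitCLM_single_succ n
    have e1 : f' 0 y (Pi.single (0 : Fin (n+1)) 1)
        = (Real.log (P (ι y)) + 1) * fderiv ℝ P (ι y) (1, 0) := by
      rw [hf'def]
      simp only [Fin.cons_zero, ContinuousLinearMap.smul_apply,
        ContinuousLinearMap.comp_apply, smul_eq_mul, hs0]
    have e2 : ∀ j : Fin n, f' j.succ y (Pi.single (j.succ : Fin (n+1)) 1)
        = M j (ι y) * (P (ι y))⁻¹ * fderiv ℝ P (ι y) (0, Pi.single j 1)
          + (Real.log (P (ι y)) + 1) * fderiv ℝ (M j) (ι y) (0, Pi.single j 1) := by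
      intro j
      rw [hf'def]
      simp only [Fin.cons_succ, ContinuousLinearMap.add_apply, ContinuousLinearMap.smul_apply,
        ContinuousLinearMap.comp_apply, smul_eq_mul, hss]
    rw [e1]
    simp only [e2]
    rw [Finset.sum_add_distrib, ← Finset.mul_sum]
    have hzero : (Real.log (P (ι y)) + 1) * fderiv ℝ P (ι y) (1, 0)
        + (Real.log (P (ι y)) + 1) * ∑ j, fderiv ℝ (M j) (ι y) (0, Pi.single j 1) = 0 := by
      rw [← mul_add, hce', mul_zero]
    have hGval : G (ι y) = ∑ j, M j (ι y) * (P (ι y))⁻¹ * fderiv ℝ P (ι y) (0, Pi.single j 1) := by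
      rw [hGdef]
      exact Finset.sum_congr rfl fun j _ => by rw [mul_assoc]
    rw [hGval]
    linarith [hzero]
  -- continuity of the pieces
  have hlogcont : ContinuousOn (fun y => Real.log (P (ι y))) (Set.Icc a' b') := by
    intro y hy
    have hPι : ContinuousAt (fun z => P (ι z)) y :=
      (hPc.continuous.comp ι.continuous).continuousAt
    exact (hPι.log (hpos y hy).ne').continuousWithinAt
  have Hc : ∀ i, ContinuousOn (f i) (Set.Icc a' b') := by
    intro i
    induction i using Fin.cases with
    | zero =>
      have : f 0 = fun y => P (ι y) * Real.log (P (ι y)) := by rw [hfdef]; rfl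
      rw [this]
      exact ((hPc.continuous.comp ι.continuous).continuousOn).mul hlogcont
    | succ j =>
      have : f j.succ = fun y => M j (ι y) * (Real.log (P (ι y)) + 1) := by rw [hfdef]; rfl
      rw [this]
      exact (((hMc j).continuous.comp ι.continuous).continuousOn).mul
        (hlogcont.add continuousOn_const)
  have Hd : ∀ y ∈ (Set.pi Set.univ fun i => Set.Ioo (a' i) (b' i)) \ (∅ : Set (Fin (n+1) → ℝ)),
      ∀ i, HasFDerivAt (f i) (f' i y) y := by
    intro y hy i
    have hy' : y ∈ Set.Icc a' b' :=
      ⟨fun k => (hy.1 k (Set.mem_univ k)).1.le, fun k => (hy.1 k (Set.mem_univ k)).2.le⟩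
    have hp := hpos y hy'
    induction i using Fin.cases with
    | zero => exact hd0 y hp
    | succ j => exact hds j y hp
  have hGιcont : ContinuousOn (fun y => G (ι y)) (Set.Icc a' b') :=
    hGcont.comp ι.continuous.continuousOn hmaps
  have Hi : IntegrableOn (fun y => ∑ i, f' i y (Pi.single i 1)) (Set.Icc a' b') := by
    refine ((hGιcont.integrableOn_compact isCompact_Icc).congr_fun ?_ measurableSet_Icc)
    intro y hy
    exact (hdiv y hy).symm
  have hdivthm := integral_divergence_of_hasFDerivAt_off_countable' a' b' hle f f' ∅
    Set.countable_empty Hc Hd Hi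
  -- preimage identity
  have hpre : (⇑(MeasurableEquiv.piFinSuccAbove (fun _ : Fin (n+1) => ℝ) 0)) ⁻¹'
      (Set.Icc ((0:ℝ), a) ((1:ℝ), b)) = Set.Icc a' b' := by
    rw [ha', hb']
    ext y
    simp only [Set.mem_preimage, Set.mem_Icc, Prod.le_def, Pi.le_def,
      MeasurableEquiv.piFinSuccAbove_apply, Fin.forall_fin_succ, Fin.cons_zero, Fin.cons_succ]
    tauto
  -- face identities
  have hface_a : a' ∘ (0 : Fin (n+1)).succAbove = a := funext fun j => by simp [ha']
  have hface_b : b' ∘ (0 : Fin (n+1)).succAbove = b := funext fun j => by simp [hb']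
  have hfront0 : ∀ x : Fin n → ℝ, f 0 (Fin.insertNth 0 (b' 0) x) = ρ 1 x * Real.log (ρ 1 x) := by
    intro x
    have h0 : f 0 (Fin.insertNth 0 (b' 0) x) = P (ι (Fin.insertNth 0 (b' 0) x))
        * Real.log (P (ι (Fin.insertNth 0 (b' 0) x))) := by rw [hfdef]; rfl
    have h1 : ι (Fin.insertNth 0 (b' 0) x) = ((1:ℝ), x) := by
      rw [splitCLM_apply]
      refine Prod.ext ?_ ?_
      · simp [hb', Fin.insertNth_zero']
      · simp [hb', Fin.insertNth_zero', Fin.tail_cons]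
    rw [h0, h1]
  have hback0 : ∀ x : Fin n → ℝ, f 0 (Fin.insertNth 0 (a' 0) x) = ρ 0 x * Real.log (ρ 0 x) := by
    intro x
    have h0 : f 0 (Fin.insertNth 0 (a' 0) x) = P (ι (Fin.insertNth 0 (a' 0) x))
        * Real.log (P (ι (Fin.insertNth 0 (a' 0) x))) := by rw [hfdef]; rfl
    have h1 : ι (Fin.insertNth 0 (a' 0) x) = ((0:ℝ), x) := by
      rw [splitCLM_apply]
      refine Prod.ext ?_ ?_
      · simp [ha', Fin.insertNth_zero']
      · simp [ha', Fin.insertNth_zero', Fin.tail_cons]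
    rw [h0, h1]
  have hkey : ∀ (j : Fin n) (c : ℝ), (c = a j ∨ c = b j) → c ∈ Set.Icc (a j) (b j) →
      (∫ x in Set.Icc (a' ∘ (j.succ : Fin (n+1)).succAbove) (b' ∘ (j.succ : Fin (n+1)).succAbove),
        f j.succ (Fin.insertNth j.succ c x)) = 0 := by
    intro j c hcase hc
    have heq : Set.EqOn (fun x => f j.succ (Fin.insertNth j.succ c x)) (fun _ => (0:ℝ))
        (Set.Icc (a' ∘ (j.succ : Fin (n+1)).succAbove) (b' ∘ (j.succ : Fin (n+1)).succAbove)) := by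
      intro x hx
      set y : Fin (n+1) → ℝ := Fin.insertNth j.succ c x with hydef
      have hy : y ∈ Set.Icc a' b' :=
        Fin.insertNth_mem_Icc.2 ⟨by simpa [ha', hb'] using hc, hx⟩
      have ht := (hmem _ hy).1
      have hxx := (hmem _ hy).2
      have hcj : Fin.tail y j = c := by
        show y j.succ = c
        rw [hydef]
        exact Fin.insertNth_apply_same (α := fun _ : Fin (n+1) => ℝ) j.succ c x
      have hm0 : m (y 0) (Fin.tail y) j = 0 := by
        apply hflux _ ht _ hxx j
        rw [hcj]; exact hcase
      have hval : f j.succ y = m (y 0) (Fin.tail y) j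
            * (Real.log (P (ι y)) + 1) := by rw [hfdef]; rfl
      show f j.succ y = 0
      rw [hval, hm0, zero_mul]
    rw [setIntegral_congr_fun measurableSet_Icc heq, integral_zero]
  calc ∫ t in Set.Icc (0:ℝ) 1, ∫ x in Set.Icc a b,
        ∑ i, m t x i * fderiv ℝ (fun y => Real.log (ρ t y)) x (Pi.single i 1)
      = ∫ t in Set.Icc (0:ℝ) 1, ∫ x in Set.Icc a b, G (t, x) := by
        refine setIntegral_congr_fun measurableSet_Icc fun t ht => ?_
        refine setIntegral_congr_fun measurableSet_Icc fun x hx => ?_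
        rw [hGdef]
        exact Finset.sum_congr rfl fun i _ => by rw [hlog t ht x hx i]
    _ = ∫ p in Set.Icc ((0:ℝ), a) ((1:ℝ), b), G p := by
        have hint : IntegrableOn G (Set.Icc ((0:ℝ), a) ((1:ℝ), b)) :=
          hGcont.integrableOn_compact isCompact_Icc
        rw [Set.Icc_prod_eq] at hint ⊢
        rw [Measure.volume_eq_prod] at hint ⊢
        exact (setIntegral_prod G hint).symm
    _ = ∫ y in Set.Icc a' b', G (ι y) := by
        have hvp := volume_preserving_piFinSuccAbove (fun _ : Fin (n+1) => ℝ) 0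
        have h := hvp.setIntegral_preimage_emb
          (MeasurableEquiv.measurableEmbedding _) G (Set.Icc ((0:ℝ), a) ((1:ℝ), b))
        rw [← h, hpre]
        rfl
    _ = ∫ y in Set.Icc a' b', ∑ i, f' i y (Pi.single i 1) :=
        setIntegral_congr_fun measurableSet_Icc fun y hy => (hdiv y hy).symm
    _ = _ := by
        rw [hdivthm, Fin.sum_univ_succ, hface_a, hface_b]
        have hzs : ∀ j : Fin n,
            ((∫ x in Set.Icc (a' ∘ (j.succ : Fin (n+1)).succAbove)
                (b' ∘ (j.succ : Fin (n+1)).succAbove),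
              f j.succ (Fin.insertNth j.succ (b' j.succ) x))
            - ∫ x in Set.Icc (a' ∘ (j.succ : Fin (n+1)).succAbove)
                (b' ∘ (j.succ : Fin (n+1)).succAbove),
              f j.succ (Fin.insertNth j.succ (a' j.succ) x)) = 0 := by
          intro j
          rw [hkey j (b' j.succ) (Or.inr (by simp [hb'])) (by simp [hb', (hab j).le]),
            hkey j (a' j.succ) (Or.inl (by simp [ha'])) (by simp [ha', (hab j).le]), sub_zero]
        simp only [hfront0, hback0, hzs, Finset.sum_const_zero, add_zero]
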